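/- Let θ ∈ (0,1] and Ω_θ := {(σ₁,σ₂) ∈ ℝ² : |（σ₁,σ₂)| ≤ 10 and 6σ₂ − 2σ₁² ≥ θ²}. Then the map Ψ(σ₁,σ₂) := (2σ₁, √(6σ₂ − 2σ₁²)) is bilipschitz on Ω_θ with bilipschitz constant O(θ^{−1}): there exist absolute constants c, C > 0 such that c·θ·|σ − η| ≤ |Ψ(σ) − Ψ(η)| ≤ C·θ^{−1}·|σ − η| for all σ, η ∈ Ω_θ. -/

import Mathlib

/-- The domain `Ω_θ`. -/
def stmt14Omega (θ : ℝ) : Set (ℝ × ℝ) :=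
  {σ : ℝ × ℝ | Real.sqrt (σ.1 ^ 2 + σ.2 ^ 2) ≤ 10 ∧ θ ^ 2 ≤ 6 * σ.2 - 2 * σ.1 ^ 2}

/-- The map `Ψ(σ₁,σ₂) = (2σ₁, √(6σ₂ − 2σ₁²))`. -/
noncomputable def stmt14Psi (σ : ℝ × ℝ) : ℝ × ℝ :=
  (2 * σ.1, Real.sqrt (6 * σ.2 - 2 * σ.1 ^ 2))

set_option maxHeartbeats 1000000 in
theorem stmt_14 :
    ∃ c > 0, ∃ C > 0, ∀ θ : ℝ, 0 < θ → θ ≤ 1 →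
      ∀ σ ∈ stmt14Omega θ, ∀ η ∈ stmt14Omega θ,
        c * θ * ‖σ - η‖ ≤ ‖stmt14Psi σ - stmt14Psi η‖ ∧
        ‖stmt14Psi σ - stmt14Psi η‖ ≤ C * θ⁻¹ * ‖σ - η‖ := by
  refine ⟨1/10, by norm_num, 25, by norm_num, ?_⟩
  intro θ hθ hθ1 σ hσ η hη
  obtain ⟨hσn, hσq⟩ := hσ
  obtain ⟨hηn, hηq⟩ := hη
  obtain ⟨a, b⟩ := σ
  obtain ⟨c, d⟩ := η
  simp only at hσn hσq hηn hηq
  -- coordinate bounds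
  have hab : a ^ 2 + b ^ 2 ≤ 100 := by
    have h := Real.sq_sqrt (by positivity : (0:ℝ) ≤ a ^ 2 + b ^ 2)
    nlinarith [Real.sqrt_nonneg (a ^ 2 + b ^ 2)]
  have hcd : c ^ 2 + d ^ 2 ≤ 100 := by
    have h := Real.sq_sqrt (by positivity : (0:ℝ) ≤ c ^ 2 + d ^ 2)
    nlinarith [Real.sqrt_nonneg (c ^ 2 + d ^ 2)]
  clear hσn hηn
  have ha : -10 ≤ a ∧ a ≤ 10 := ⟨by nlinarith, by nlinarith⟩
  have hb : -10 ≤ b ∧ b ≤ 10 := ⟨by nlinarith, by nlinarith⟩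
  have hc : -10 ≤ c ∧ c ≤ 10 := ⟨by nlinarith, by nlinarith⟩
  have hd : -10 ≤ d ∧ d ≤ 10 := ⟨by nlinarith, by nlinarith⟩
  set s₁ := Real.sqrt (6 * b - 2 * a ^ 2) with hs₁
  set s₂ := Real.sqrt (6 * d - 2 * c ^ 2) with hs₂
  have hr₁ : (0:ℝ) ≤ 6 * b - 2 * a ^ 2 := le_trans (by positivity) hσq
  have hr₂ : (0:ℝ) ≤ 6 * d - 2 * c ^ 2 := le_trans (by positivity) hηq
  have hs₁sq : s₁ ^ 2 = 6 * b - 2 * a ^ 2 := Real.sq_sqrt hr₁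
  have hs₂sq : s₂ ^ 2 = 6 * d - 2 * c ^ 2 := Real.sq_sqrt hr₂
  have hs₁θ : θ ≤ s₁ := (Real.le_sqrt hθ.le hr₁).mpr hσq
  have hs₂θ : θ ≤ s₂ := (Real.le_sqrt hθ.le hr₂).mpr hηq
  have hs₁n : 0 ≤ s₁ := Real.sqrt_nonneg _
  have hs₂n : 0 ≤ s₂ := Real.sqrt_nonneg _
  have hs₁8 : s₁ ≤ 8 := by nlinarith [hb.2]
  have hs₂8 : s₂ ≤ 8 := by nlinarith [hd.2]
  -- norms as maxima of absolute values
  have hNeq : ‖((a, b) : ℝ × ℝ) - (c, d)‖ = max |a - c| |b - d| := by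
    rw [Prod.norm_def]; simp [Real.norm_eq_abs, Prod.sub_def]
  have hMeq : ‖stmt14Psi (a, b) - stmt14Psi (c, d)‖ = max |2 * a - 2 * c| |s₁ - s₂| := by
    rw [Prod.norm_def]; simp [stmt14Psi, Real.norm_eq_abs, Prod.sub_def, hs₁, hs₂]
  rw [hNeq, hMeq]
  set M := max |2 * a - 2 * c| |s₁ - s₂| with hMdef
  set N := max |a - c| |b - d| with hNdef
  have habs2 : |2 * a - 2 * c| = 2 * |a - c| := by
    rw [show 2 * a - 2 * c = 2 * (a - c) by ring, abs_mul, abs_two]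
  have hM1 : 2 * |a - c| ≤ M := habs2 ▸ le_max_left _ _
  have hM2 : |s₁ - s₂| ≤ M := le_max_right _ _
  have hMn : 0 ≤ M := le_trans (abs_nonneg _) hM2
  have hN1 : |a - c| ≤ N := le_max_left _ _
  have hN2 : |b - d| ≤ N := le_max_right _ _
  have hNn : 0 ≤ N := le_trans (abs_nonneg _) hN1
  have hinv : (1:ℝ) ≤ θ⁻¹ := (one_le_inv₀ hθ).mpr hθ1
  have h6 : 6 * (b - d) = (s₁ - s₂) * (s₁ + s₂) + 2 * ((a - c) * (a + c)) := by
    nlinarith [hs₁sq, hs₂sq]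
  have hsum16 : |s₁ + s₂| ≤ 16 := abs_le.mpr ⟨by linarith, by linarith⟩
  have hac20 : |a + c| ≤ 20 := abs_le.mpr ⟨by linarith [ha.1, hc.1], by linarith [ha.2, hc.2]⟩
  -- product bounds
  have hP1 : |(s₁ - s₂) * (s₁ + s₂)| ≤ 16 * M := by
    rw [abs_mul]
    calc |s₁ - s₂| * |s₁ + s₂| ≤ M * 16 :=
          mul_le_mul hM2 hsum16 (abs_nonneg _) hMn
      _ = 16 * M := by ring
  have hP2 : |(a - c) * (a + c)| ≤ 20 * |a - c| := by
    rw [abs_mul]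
    calc |a - c| * |a + c| ≤ |a - c| * 20 :=
          mul_le_mul_of_nonneg_left hac20 (abs_nonneg _)
      _ = 20 * |a - c| := by ring
  constructor
  · -- lower bound
    have hbd6 : |b - d| ≤ 6 * M := by
      have h1 := abs_le.mp hP1
      have h2 := abs_le.mp hP2
      rw [abs_le]
      constructor <;> nlinarith
    have key : N ≤ 10 * M := max_le (by linarith) (by linarith)
    calc 1 / 10 * θ * N ≤ 1 / 10 * 1 * (10 * M) := by
          apply mul_le_mul _ key hNn (by norm_num)
          nlinarith
      _ = M := by ring
  · -- upper bound
    have hacN : |(a - c) * (a + c)| ≤ 20 * N := le_trans hP2 (by linarith)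
    apply max_le
    · rw [habs2]
      nlinarith [mul_le_mul_of_nonneg_right hinv hNn]
    · -- |s₁ - s₂| * 2θ ≤ 46 N
      have hss : |s₁ - s₂| * (s₁ + s₂) = |(s₁ - s₂) * (s₁ + s₂)| := by
        rw [abs_mul, abs_of_nonneg (by linarith : (0:ℝ) ≤ s₁ + s₂)]
      have htri : |(s₁ - s₂) * (s₁ + s₂)| ≤ 6 * |b - d| + 2 * |(a - c) * (a + c)| := by
        have heq : (s₁ - s₂) * (s₁ + s₂) = 6 * (b - d) - 2 * ((a - c) * (a + c)) := by
          linarith [h6]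
        rw [heq]
        calc |6 * (b - d) - 2 * ((a - c) * (a + c))|
            ≤ |6 * (b - d)| + |2 * ((a - c) * (a + c))| := abs_sub _ _
          _ = 6 * |b - d| + 2 * |(a - c) * (a + c)| := by
              rw [abs_mul, abs_mul]; norm_num
      have key : |s₁ - s₂| * (2 * θ) ≤ 46 * N := by
        have h1 : |s₁ - s₂| * (2 * θ) ≤ |s₁ - s₂| * (s₁ + s₂) :=
          mul_le_mul_of_nonneg_left (by linarith) (abs_nonneg _)
        rw [hss] at h1
        linarith
      have h2 := mul_le_mul_of_nonneg_left key (inv_pos.mpr hθ).le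
      have h3 : θ⁻¹ * (|s₁ - s₂| * (2 * θ)) = 2 * |s₁ - s₂| := by
        field_simp
      rw [h3] at h2
      have h4 : 0 ≤ θ⁻¹ * N := mul_nonneg (inv_pos.mpr hθ).le hNn
      have h5 : θ⁻¹ * (46 * N) = 46 * (θ⁻¹ * N) := by ring
      rw [h5] at h2
      have h6' : (25:ℝ) * θ⁻¹ * N = 25 * (θ⁻¹ * N) := by ring
      rw [h6']
      linarith
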